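/- Let n ≥ 1, a ∈ (0,∞], let F₁ and F₂ be admissible on [0,a), and let Ω be a nonempty open convex subset of ℝⁿ. Then every F₂-concave function f: Ω → [0,a) is F₁-concave in Ω if and only if every F₂-concave function g: ℝ → [0,a) is F₁-concave in ℝ. -/

import Mathlib

open MeasureTheory Real Set Filter

noncomputable section

abbrev Euc (n : ℕ) := EuclideanSpace ℝ (Fin n)

noncomputable def heatFlow (n : ℕ) (t : ℝ) (φ : Euc n → ℝ) (x : Euc n) : ℝ :=
  (4 * Real.pi * t) ^ (-(n : ℝ) / 2) * ∫ y, Real.exp (-‖x - y‖ ^ 2 / (4 * t)) * φ y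

/-- `f` is `F`-concave on `Ω` (extended-real valued inequality). -/
def FConcaveOn {V : Type*} [AddCommGroup V] [Module ℝ V]
    (Ω : Set V) (F : ℝ → EReal) (f : V → ℝ) : Prop :=
  ∀ x ∈ Ω, ∀ y ∈ Ω, ∀ τ : ℝ, τ ∈ Set.Ioo (0:ℝ) 1 →
    ((1 - τ : ℝ) : EReal) * F (f x) + ((τ : ℝ) : EReal) * F (f y)
      ≤ F (f ((1 - τ) • x + τ • y))

/-- `F` is admissible on `[0, a)`. -/
def Admissible (a : EReal) (F : ℝ → EReal) : Prop :=
  0 < a ∧ F 0 = ⊥ ∧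
  ContinuousOn F {r : ℝ | 0 < r ∧ (r : EReal) < a} ∧
  (∀ r : ℝ, 0 < r → (r : EReal) < a → F r ≠ ⊥ ∧ F r ≠ ⊤) ∧
  StrictMonoOn F {r : ℝ | 0 ≤ r ∧ (r : EReal) < a}

/-- extended-real logarithm with `log 0 = -∞`. -/
noncomputable def elog (r : ℝ) : EReal := if 0 < r then (Real.log r : EReal) else ⊥

noncomputable def Efun (s : ℝ) : ℝ :=
  (4 * Real.pi) ^ (-(1:ℝ) / 2) * ∫ s' in Set.Ioi (0:ℝ), Real.exp (-(s - s') ^ 2 / 4)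

noncomputable def Hfun : ℝ → ℝ := Function.invFun Efun

noncomputable def Ha (a : EReal) (r : ℝ) : EReal :=
  if 0 < r then
    (if a = ⊤ then (Real.log r : EReal) else (Hfun (r / a.toReal) : EReal))
  else ⊥

/-- comparison of `F₁`- and `F₂`-concavity on a nonempty open convex `Ω ⊆ ℝⁿ`
reduces to the one-dimensional case. -/
theorem stmt6 (n : ℕ) (hn : 1 ≤ n) (a : EReal) (F₁ F₂ : ℝ → EReal)
    (h₁ : Admissible a F₁) (h₂ : Admissible a F₂)
    (Ω : Set (Euc n)) (hne : Ω.Nonempty) (hop : IsOpen Ω) (hconv : Convex ℝ Ω) :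
    (∀ f : Euc n → ℝ, (∀ x ∈ Ω, 0 ≤ f x ∧ (f x : EReal) < a) →
        FConcaveOn Ω F₂ f → FConcaveOn Ω F₁ f) ↔
    (∀ g : ℝ → ℝ, (∀ x : ℝ, 0 ≤ g x ∧ (g x : EReal) < a) →
        FConcaveOn (Set.univ : Set ℝ) F₂ g → FConcaveOn (Set.univ : Set ℝ) F₁ g) := by
  obtain ⟨ha1, hF10, -, -, -⟩ := h₁
  obtain ⟨-, hF20, -, hF2ne, -⟩ := h₂
  constructor
  · -- n-dimensional statement implies 1-dimensional statement
    intro hΩ g hgb hg2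
    obtain ⟨x₀, hx₀⟩ := hne
    obtain ⟨ε, hε, hball⟩ := Metric.isOpen_iff.1 hop x₀ hx₀
    set i : Fin n := ⟨0, hn⟩
    set e : Euc n := EuclideanSpace.single i (1:ℝ) with he
    set δ : ℝ := ε / 2 with hδdef
    have hδ : 0 < δ := by positivity
    set q : Euc n := x₀ + δ • e with hqdef
    have hq : q ∈ Ω := by
      apply hball
      rw [Metric.mem_ball, dist_eq_norm]
      have : q - x₀ = δ • e := by rw [hqdef]; abel
      rw [this, norm_smul, he, EuclideanSpace.norm_single]
      simp only [norm_one, Real.norm_eq_abs, abs_of_pos hδ, mul_one]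
      rw [hδdef]; linarith
    intro u _ v _ τ hτ
    set c : ℝ := x₀ i with hc
    set A : Euc n → ℝ := fun z => u + (z i - c) / δ * (v - u) with hA
    have hAaff : ∀ (x y : Euc n) (σ : ℝ),
        A ((1 - σ) • x + σ • y) = (1 - σ) * A x + σ * A y := by
      intro x y σ
      have hxy : ((1 - σ) • x + σ • y) i = (1 - σ) * x i + σ * y i := by
        simp [PiLp.add_apply, PiLp.smul_apply, smul_eq_mul]
      rw [hA]
      simp only [hxy]
      field_simp
      ring
    set f : Euc n → ℝ := fun z => g (A z) with hf
    have hfb : ∀ x ∈ Ω, 0 ≤ f x ∧ (f x : EReal) < a := fun x _ => hgb (A x)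
    have hf2 : FConcaveOn Ω F₂ f := by
      intro x _ y _ σ hσ
      have h := hg2 (A x) trivial (A y) trivial σ hσ
      rw [smul_eq_mul, smul_eq_mul, ← hAaff] at h
      exact h
    have hf1 := hΩ f hfb hf2 x₀ hx₀ q hq τ hτ
    have hAx₀ : A x₀ = u := by rw [hA]; simp [hc]
    have hAq : A q = v := by
      have hqi : q i = c + δ := by
        rw [hqdef, hc]
        simp [PiLp.add_apply, PiLp.smul_apply, he, EuclideanSpace.single_apply]
      rw [hA]
      simp only [hqi]
      field_simp
      ring
    have hmid : f ((1 - τ) • x₀ + τ • q) = g ((1 - τ) * u + τ * v) := by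
      rw [hf]
      simp only [hAaff x₀ q τ, hAx₀, hAq]
    have hfx₀ : f x₀ = g u := by rw [hf]; simp only [hAx₀]
    have hfq : f q = g v := by rw [hf]; simp only [hAq]
    rw [hfx₀, hfq, hmid] at hf1
    rw [smul_eq_mul, smul_eq_mul]
    exact hf1
  · -- 1-dimensional statement implies n-dimensional statement
    intro h1 f hfb hf2
    intro x hx y hy τ hτ
    set ℓ : ℝ → Euc n := fun t => (1 - t) • x + t • y with hℓ
    have hℓΩ : ∀ t ∈ Set.Icc (0:ℝ) 1, ℓ t ∈ Ω := by
      intro t ht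
      exact hconv hx hy (by linarith [ht.2]) ht.1 (by ring)
    set g : ℝ → ℝ := fun t => if t ∈ Set.Icc (0:ℝ) 1 then f (ℓ t) else 0 with hg
    have hgb : ∀ t : ℝ, 0 ≤ g t ∧ (g t : EReal) < a := by
      intro t
      by_cases ht : t ∈ Set.Icc (0:ℝ) 1
      · simp only [hg, if_pos ht]; exact hfb _ (hℓΩ t ht)
      · simp only [hg, if_neg ht]
        refine ⟨le_refl 0, ?_⟩
        simpa using ha1
    have hg2 : FConcaveOn (Set.univ : Set ℝ) F₂ g := by
      intro s _ t _ σ hσ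
      by_cases hs : s ∈ Set.Icc (0:ℝ) 1
      · by_cases ht : t ∈ Set.Icc (0:ℝ) 1
        · have hm : (1 - σ) • s + σ • t ∈ Set.Icc (0:ℝ) 1 := by
            simp only [smul_eq_mul]
            constructor
            · nlinarith [hs.1, ht.1, hσ.1, hσ.2]
            · nlinarith [hs.2, ht.2, hσ.1, hσ.2]
          have key := hf2 (ℓ s) (hℓΩ s hs) (ℓ t) (hℓΩ t ht) σ hσ
          have hmid : ℓ ((1 - σ) • s + σ • t) = (1 - σ) • ℓ s + σ • ℓ t := by
            rw [hℓ]
            simp only [smul_eq_mul, smul_add, smul_smul]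
            module
          rw [hg]
          simp only [if_pos hs, if_pos ht, if_pos hm, hmid]
          exact key
        · have hgt : F₂ (g t) = ⊥ := by rw [hg]; simp only [if_neg ht]; exact hF20
          rw [hgt, EReal.coe_mul_bot_of_pos hσ.1, EReal.add_bot]
          exact bot_le
      · have hgs : F₂ (g s) = ⊥ := by rw [hg]; simp only [if_neg hs]; exact hF20
        rw [hgs, EReal.coe_mul_bot_of_pos (by linarith [hσ.2]), EReal.bot_add]
        exact bot_le
    have hg1 := h1 g hgb hg2 0 trivial 1 trivial τ hτ
    have h0 : g 0 = f x := by
      rw [hg]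
      simp only [Set.mem_Icc, le_refl, zero_le_one, and_self, if_pos, hℓ]
      norm_num
    have h1' : g 1 = f y := by
      rw [hg]
      simp only [Set.mem_Icc, zero_le_one, le_refl, and_self, if_pos, hℓ]
      norm_num
    have hτval : (1 - τ) • (0:ℝ) + τ • (1:ℝ) = τ := by simp
    have hτIcc : τ ∈ Set.Icc (0:ℝ) 1 := ⟨le_of_lt hτ.1, le_of_lt hτ.2⟩
    have hmid : g ((1 - τ) • (0:ℝ) + τ • (1:ℝ)) = f ((1 - τ) • x + τ • y) := by
      rw [hτval, hg]
      simp only [if_pos hτIcc, hℓ]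
    rw [h0, h1', hmid] at hg1
    exact hg1
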